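/- arXiv:1705.06581 — 3 statements merged into one kernel-verified Lean document; each statement's English description precedes it below -/
import Mathlib

section
/- Let V be a vector space over a finite field F_q, let A and S be finite subsets of V with 0 ∉ S, and let B ⊆ F_q \ {0} be a set of scalars. Then ∑_{ξ ∈ S} E(A, ξB) ≤ |A|²|B|² + |S||A||B|, where E(A, ξB) counts quadruples (a₁,a₂,b₁,b₂) ∈ A²×B² with a₁ - a₂ = (b₁ - b₂)ξ. -/
set_option maxRecDepth 4000


/-- Energy upper bound (Lemma BKT): for `A, S ⊆ V` finite with `0 ∉ S` and scalars
`B ⊆ F_q \ {0}`, `∑_{ξ ∈ S} E(A, ξB) ≤ |A|²|B|² + |S||A||B|`. -/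
theorem stmt_1 {Fq V : Type*} [Field Fq] [Fintype Fq] [AddCommGroup V] [Module Fq V]
    [DecidableEq V]
    (A S : Finset V) (B : Finset Fq) (hS : (0 : V) ∉ S) (hB : (0 : Fq) ∉ B) :
    ∑ ξ ∈ S, (((A ×ˢ A) ×ˢ B ×ˢ B).filter
        (fun t => t.1.1 - t.1.2 = (t.2.1 - t.2.2) • ξ)).card ≤
      A.card ^ 2 * B.card ^ 2 + S.card * A.card * B.card := by
  classical
  set X := (A ×ˢ A) ×ˢ B ×ˢ B with hXdef
  -- per-ξ split into off-diagonal and diagonal parts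
  have hsplit : ∀ ξ ∈ S,
      (X.filter (fun t => t.1.1 - t.1.2 = (t.2.1 - t.2.2) • ξ)).card ≤
      (X.filter (fun t => (t.1.1 - t.1.2 = (t.2.1 - t.2.2) • ξ) ∧ t.1.1 ≠ t.1.2)).card
        + A.card * B.card := by
    intro ξ hξ
    have hξ0 : ξ ≠ 0 := fun h => hS (h ▸ hξ)
    have hsubset : X.filter (fun t => t.1.1 - t.1.2 = (t.2.1 - t.2.2) • ξ) ⊆
        X.filter (fun t => (t.1.1 - t.1.2 = (t.2.1 - t.2.2) • ξ) ∧ t.1.1 ≠ t.1.2) ∪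
        X.filter (fun t => (t.1.1 - t.1.2 = (t.2.1 - t.2.2) • ξ) ∧ t.1.1 = t.1.2) := by
      intro t ht
      simp only [Finset.mem_filter, Finset.mem_union] at ht ⊢
      tauto
    refine (Finset.card_le_card hsubset).trans ((Finset.card_union_le _ _).trans ?_)
    refine Nat.add_le_add_left ?_ _
    -- diagonal part injects into A ×ˢ B
    have : (X.filter (fun t => (t.1.1 - t.1.2 = (t.2.1 - t.2.2) • ξ) ∧ t.1.1 = t.1.2)).card
        ≤ (A ×ˢ B).card := by
      apply Finset.card_le_card_of_injOn (fun t => (t.1.1, t.2.1))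
      · intro t ht
        simp only [Finset.mem_coe, Finset.mem_filter, Finset.mem_product, hXdef] at ht
        exact Finset.mem_product.mpr ⟨ht.1.1.1, ht.1.2.1⟩
      · intro t ht t' ht' h
        simp only [Finset.mem_coe, Finset.mem_filter] at ht ht'
        have hb : ∀ s : (V × V) × Fq × Fq,
            (s.1.1 - s.1.2 = (s.2.1 - s.2.2) • ξ) → s.1.1 = s.1.2 → s.2.1 = s.2.2 := by
          intro s h1 h2
          rw [h2, sub_self] at h1
          have := (smul_eq_zero.mp h1.symm).resolve_right hξ0
          exact sub_eq_zero.mp this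
        have h1 := hb t ht.2.1 ht.2.2
        have h2 := hb t' ht'.2.1 ht'.2.2
        simp only [Prod.mk.injEq] at h
        obtain ⟨e1, e2⟩ := h
        ext <;> simp_all
    simpa [Finset.card_product] using this
  -- sum over ξ of off-diagonal parts ≤ |X|
  have key : ∑ ξ ∈ S,
      (X.filter (fun t => (t.1.1 - t.1.2 = (t.2.1 - t.2.2) • ξ) ∧ t.1.1 ≠ t.1.2)).card
      ≤ X.card := by
    rw [← Finset.card_sigma]
    apply Finset.card_le_card_of_injOn (fun p => p.2)
    · intro p hp
      rw [Finset.mem_coe, Finset.mem_sigma] at hp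
      exact (Finset.mem_filter.mp hp.2).1
    · intro p hp q hq h
      simp only [Finset.mem_coe, Finset.mem_sigma, Finset.mem_filter] at hp hq
      simp only at h
      obtain ⟨_, _, h1, hne⟩ := hp
      obtain ⟨_, _, h1', _⟩ := hq
      rw [h] at h1 hne
      have hb : q.2.2.1 - q.2.2.2 ≠ 0 := by
        intro hz
        rw [hz, zero_smul, sub_eq_zero] at h1
        exact hne h1
      have : p.1 = q.1 := smul_right_injective V hb (h1.symm.trans h1')
      exact Sigma.ext this (by rw [h])
  calc ∑ ξ ∈ S, (X.filter (fun t => t.1.1 - t.1.2 = (t.2.1 - t.2.2) • ξ)).card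
      ≤ ∑ ξ ∈ S, ((X.filter (fun t => (t.1.1 - t.1.2 = (t.2.1 - t.2.2) • ξ) ∧ t.1.1 ≠ t.1.2)).card
          + A.card * B.card) := Finset.sum_le_sum hsplit
    _ = (∑ ξ ∈ S, (X.filter (fun t => (t.1.1 - t.1.2 = (t.2.1 - t.2.2) • ξ) ∧ t.1.1 ≠ t.1.2)).card)
          + S.card * (A.card * B.card) := by rw [Finset.sum_add_distrib, Finset.sum_const, smul_eq_mul]
    _ ≤ X.card + S.card * (A.card * B.card) := Nat.add_le_add_right key _
    _ = A.card ^ 2 * B.card ^ 2 + S.card * A.card * B.card := by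
        simp [hXdef, Finset.card_product]; ring
end

section
/- Let V be a vector space over a finite field F_q, let A, S be finite subsets of V with 0 ∉ S, and B ⊆ F_q \ {0}. Then there exists ξ ∈ S such that |A + Bξ| ≥ (1/2)·min{|S|, |A||B|}, where A + Bξ = {a + bξ : a ∈ A, b ∈ B}. -/
open Finset

/-- Cauchy–Schwarz for fibers: `|s|² ≤ |image f s| · E(f, s)` where `E` counts pairs
with equal image. -/
lemma aux_sq_card_le {α β : Type*} [DecidableEq α] [DecidableEq β] (s : Finset α) (f : α → β) :
    s.card ^ 2 ≤ (s.image f).card *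
      ((s ×ˢ s).filter (fun q => f q.1 = f q.2)).card := by
  have hcard : s.card = ∑ b ∈ s.image f, (s.filter (fun a => f a = b)).card :=
    card_eq_sum_card_fiberwise (fun x hx => mem_image_of_mem f hx)
  have hE : ((s ×ˢ s).filter (fun q => f q.1 = f q.2)).card
      = ∑ b ∈ s.image f, (s.filter (fun a => f a = b)).card ^ 2 := by
    rw [card_eq_sum_card_fiberwise (f := fun q => f q.1) (t := s.image f)
      (fun q hq => by
        simp only [mem_coe, mem_filter, mem_product] at hq
        exact mem_image_of_mem f hq.1.1)]
    refine Finset.sum_congr rfl fun b hb => ?_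
    have : ((s ×ˢ s).filter (fun q => f q.1 = f q.2)).filter (fun q => f q.1 = b)
        = (s.filter (fun a => f a = b)) ×ˢ (s.filter (fun a => f a = b)) := by
      ext q
      simp only [mem_filter, mem_product]
      constructor
      · rintro ⟨⟨⟨h1, h2⟩, h3⟩, h4⟩
        exact ⟨⟨h1, h4⟩, ⟨h2, h3 ▸ h4⟩⟩
      · rintro ⟨⟨h1, h4⟩, ⟨h2, h5⟩⟩
        exact ⟨⟨⟨h1, h2⟩, h4.trans h5.symm⟩, h4⟩
    rw [this, card_product, sq]
  rw [hE, hcard]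
  exact sq_sum_le_card_mul_sum_sq

/-- Lemma BKT, second part: there exists `ξ ∈ S` with
`|A + Bξ| ≥ (1/2)·min{|S|, |A||B|}`. -/
theorem stmt_2 {Fq V : Type*} [Field Fq] [Fintype Fq] [AddCommGroup V] [Module Fq V]
    [DecidableEq V]
    (A S : Finset V) (B : Finset Fq) (hS : (0 : V) ∉ S) (hB : (0 : Fq) ∉ B)
    (hSne : S.Nonempty) :
    ∃ ξ ∈ S, 2 * ((A ×ˢ B).image (fun p => p.1 + p.2 • ξ)).card ≥
      min S.card (A.card * B.card) := by
  classical
  set D : Finset (V × Fq) := A ×ˢ B with hD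
  set f : V → V × Fq → V := fun ξ p => p.1 + p.2 • ξ with hf
  set E : V → ℕ := fun ξ => ((D ×ˢ D).filter (fun q => f ξ q.1 = f ξ q.2)).card with hEdef
  -- Energy sum bound
  have hsum : ∑ ξ ∈ S, E ξ ≤ S.card * D.card + D.card * D.card := by
    have hsplit : ∀ ξ, E ξ ≤ D.card +
        ((D ×ˢ D).filter (fun q => f ξ q.1 = f ξ q.2 ∧ q.1 ≠ q.2)).card := by
      intro ξ
      have : E ξ = ((D ×ˢ D).filter (fun q => f ξ q.1 = f ξ q.2 ∧ q.1 = q.2)).card +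
          ((D ×ˢ D).filter (fun q => f ξ q.1 = f ξ q.2 ∧ ¬ q.1 = q.2)).card := by
        rw [hEdef]
        simp only [← Finset.filter_filter]
        exact (Finset.card_filter_add_card_filter_not _).symm
      rw [this]
      gcongr
      · -- diagonal part injects into D via Prod.fst
        apply Finset.card_le_card_of_injOn Prod.fst
        · intro q hq
          simp only [mem_coe, mem_filter, mem_product] at hq
          exact hq.1.1
        · intro q hq q' hq' h
          simp only [coe_filter, Set.mem_setOf_eq, mem_product] at hq hq'
          have := hq.2.2; have := hq'.2.2
          ext <;> simp_all [Prod.ext_iff]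
    calc ∑ ξ ∈ S, E ξ ≤ ∑ ξ ∈ S, (D.card +
        ((D ×ˢ D).filter (fun q => f ξ q.1 = f ξ q.2 ∧ q.1 ≠ q.2)).card) :=
          Finset.sum_le_sum fun ξ _ => hsplit ξ
      _ = S.card * D.card + ∑ ξ ∈ S,
          ((D ×ˢ D).filter (fun q => f ξ q.1 = f ξ q.2 ∧ q.1 ≠ q.2)).card := by
          rw [Finset.sum_add_distrib, Finset.sum_const, smul_eq_mul]
      _ ≤ S.card * D.card + D.card * D.card := by
          gcongr
          -- off-diagonal parts are pairwise disjoint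
          have hdisj : ∀ ξ₁ ∈ S, ∀ ξ₂ ∈ S, ξ₁ ≠ ξ₂ → Disjoint
              ((D ×ˢ D).filter (fun q => f ξ₁ q.1 = f ξ₁ q.2 ∧ q.1 ≠ q.2))
              ((D ×ˢ D).filter (fun q => f ξ₂ q.1 = f ξ₂ q.2 ∧ q.1 ≠ q.2)) := by
            intro ξ₁ _ ξ₂ _ hne
            rw [Finset.disjoint_left]
            rintro ⟨⟨a, b⟩, ⟨a', b'⟩⟩ h1 h2
            simp only [mem_filter, hf] at h1 h2
            obtain ⟨-, he1, hq⟩ := h1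
            obtain ⟨-, he2, -⟩ := h2
            by_cases hbb : b = b'
            · subst hbb
              exact hq (by
                have : a = a' := by
                  have := he1
                  simpa using this
                simp [this])
            · apply hne
              have h3 : (b - b') • ξ₁ = (b - b') • ξ₂ := by
                have e1 : b • ξ₁ - b' • ξ₁ = a' - a := by
                  rw [← sub_eq_zero] at he1 ⊢
                  rw [← he1]; abel
                have e2 : b • ξ₂ - b' • ξ₂ = a' - a := by
                  rw [← sub_eq_zero] at he2 ⊢
                  rw [← he2]; abel
                rw [sub_smul, sub_smul, e1, e2]
              have hb0 : b - b' ≠ 0 := sub_ne_zero_of_ne hbb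
              have := smul_right_injective V hb0 h3
              exact this
          calc ∑ ξ ∈ S, ((D ×ˢ D).filter (fun q => f ξ q.1 = f ξ q.2 ∧ q.1 ≠ q.2)).card
              = (S.biUnion (fun ξ =>
                  (D ×ˢ D).filter (fun q => f ξ q.1 = f ξ q.2 ∧ q.1 ≠ q.2))).card :=
                (Finset.card_biUnion hdisj).symm
            _ ≤ (D ×ˢ D).card := Finset.card_le_card (by
                intro q hq
                simp only [Finset.mem_biUnion, mem_filter] at hq
                obtain ⟨ξ, -, hq, -⟩ := hq
                exact hq)
            _ = D.card * D.card := by rw [card_product]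
  -- pick ξ minimizing E
  obtain ⟨ξ, hξS, hmin⟩ := S.exists_min_image E hSne
  refine ⟨ξ, hξS, ?_⟩
  have hpigeon : S.card * E ξ ≤ S.card * D.card + D.card * D.card := by
    calc S.card * E ξ = ∑ _x ∈ S, E ξ := by rw [Finset.sum_const, smul_eq_mul]
      _ ≤ ∑ x ∈ S, E x := Finset.sum_le_sum fun x hx => hmin x hx
      _ ≤ _ := hsum
  have hCS : D.card ^ 2 ≤ (D.image (f ξ)).card * E ξ := aux_sq_card_le D (f ξ)
  set K := (D.image (f ξ)).card with hK
  have hDcard : D.card = A.card * B.card := card_product A B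
  set N := D.card with hN
  rw [ge_iff_le, ← hDcard]
  -- final arithmetic
  rcases Nat.eq_zero_or_pos N with hN0 | hNpos
  · simp [hN0]
  have hchain : S.card * N ^ 2 ≤ K * (S.card * N + N * N) := by
    calc S.card * N ^ 2 ≤ S.card * (K * E ξ) := by gcongr
      _ = K * (S.card * E ξ) := by ring
      _ ≤ K * (S.card * N + N * N) := by gcongr
  rcases le_total S.card N with hle | hle
  · have h2 : S.card * N ^ 2 ≤ (2 * K) * N ^ 2 := by
      calc S.card * N ^ 2 ≤ K * (N * N + N * N) := by
            refine hchain.trans ?_; gcongr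
        _ = (2 * K) * N ^ 2 := by ring
    have := Nat.le_of_mul_le_mul_right
      h2 (pow_pos hNpos 2)
    exact le_trans (min_le_left _ _) this
  · have hSpos : 0 < S.card := Finset.card_pos.mpr hSne
    have h2 : N * (S.card * N) ≤ (2 * K) * (S.card * N) := by
      calc N * (S.card * N) = S.card * N ^ 2 := by ring
        _ ≤ K * (S.card * N + S.card * N) := by
            refine hchain.trans ?_; gcongr
        _ = (2 * K) * (S.card * N) := by ring
    have := Nat.le_of_mul_le_mul_right
      h2 (Nat.mul_pos hSpos hNpos)
    exact le_trans (min_le_right _ _) this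
end

section
/- Let A ⊆ F_q be a finite set and suppose there is K > 0 with |A| ≤ q/(4K) and D_×(A) ≥ |A|⁸/q + 3q|A|⁵/K, where D_×(A) counts 8-tuples of A with (a₁-a₂)(a₃-a₄) = (a₅-a₆)(a₇-a₈). Then there exists a set X ⊆ F_q such that E(A, ξA) ≥ |A|³/K for all ξ ∈ X and q/(K|A|) ≤ |X| ≤ 4Kq/(3|A|). -/
open Finset

section AuxLemmas

set_option linter.unusedSectionVars false

variable {Fq : Type*} [Field Fq] [Fintype Fq] [DecidableEq Fq]

lemma count_one (x y : Fq) :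
    (univ.filter (fun ξ : Fq => x = ξ * y)).card + (if y = 0 then 1 else 0)
      = 1 + Fintype.card Fq * (if x = 0 ∧ y = 0 then 1 else 0) := by
  rcases eq_or_ne y 0 with hy | hy
  · subst hy
    rcases eq_or_ne x 0 with hx | hx
    · subst hx
      simp [Finset.filter_true_of_mem, Finset.card_univ, Nat.add_comm]
    · simp [hx]
  · have hset : (univ.filter (fun ξ : Fq => x = ξ * y)) = {x * y⁻¹} := by
      ext ξ
      simp only [mem_filter, mem_univ, true_and, mem_singleton]
      constructor
      · intro h; field_simp [h]; exact h.symm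
      · intro h; subst h; field_simp
    simp [hset, hy]

lemma count_two (x1 y1 x2 y2 : Fq) :
    (univ.filter (fun ξ : Fq => x1 = ξ * y1 ∧ x2 = ξ * y2)).card
        + (if y1 = 0 ∧ y2 = 0 then 1 else 0)
      = (if x1 * y2 = x2 * y1 then 1 else 0)
        + Fintype.card Fq * (if (x1 = 0 ∧ y1 = 0) ∧ (x2 = 0 ∧ y2 = 0) then 1 else 0) := by
  rcases eq_or_ne y1 0 with hy1 | hy1
  · subst hy1
    rcases eq_or_ne y2 0 with hy2 | hy2
    · subst hy2
      rcases eq_or_ne x1 0 with hx1 | hx1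
      · rcases eq_or_ne x2 0 with hx2 | hx2
        · subst hx1; subst hx2
          simp [Finset.filter_true_of_mem, Finset.card_univ, Nat.add_comm]
        · simp [hx2]
      · simp [hx1]
    · -- y1 = 0, y2 ≠ 0
      rcases eq_or_ne x1 0 with hx1 | hx1
      · subst hx1
        have hset : (univ.filter (fun ξ : Fq => (0:Fq) = ξ * 0 ∧ x2 = ξ * y2)) = {x2 * y2⁻¹} := by
          ext ξ
          simp only [mem_filter, mem_univ, true_and, mem_singleton, mul_zero,
            eq_self_iff_true, true_and]
          constructor
          · intro h; field_simp [h]; exact h.symm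
          · intro h; subst h; field_simp
        rw [hset]
        simp [hy2]
      · have hset : (univ.filter (fun ξ : Fq => x1 = ξ * 0 ∧ x2 = ξ * y2)) = ∅ := by
          ext ξ; simp [hx1]
        rw [hset]
        have : x1 * y2 ≠ x2 * 0 := by simp [hx1, hy2]
        simp [this, hx1]
  · -- y1 ≠ 0
    rcases eq_or_ne (x1 * y2) (x2 * y1) with hc | hc
    · have hset : (univ.filter (fun ξ : Fq => x1 = ξ * y1 ∧ x2 = ξ * y2)) = {x1 * y1⁻¹} := by
        ext ξ
        simp only [mem_filter, mem_univ, true_and, mem_singleton]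
        constructor
        · rintro ⟨h1, -⟩; field_simp [h1]; exact h1.symm
        · intro h; subst h; constructor
          · field_simp
          · field_simp
            linear_combination -hc
      simp [hset, hc, hy1]
    · have hset : (univ.filter (fun ξ : Fq => x1 = ξ * y1 ∧ x2 = ξ * y2)) = ∅ := by
        ext ξ
        simp only [mem_filter, mem_univ, true_and, Finset.notMem_empty, iff_false, not_and]
        intro h1 h2
        exact hc (by rw [h1, h2]; ring)
      simp [hset, hc, hy1]

lemma sum_diag_ind (A : Finset Fq) :
    ∑ v ∈ A ×ˢ A, (if v.1 - v.2 = 0 then (1:ℕ) else 0) = A.card := by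
  rw [Finset.sum_product]
  have h : ∀ a ∈ A, (∑ b ∈ A, if a - b = 0 then (1:ℕ) else 0) = 1 := by
    intro a ha
    have : ∀ b : Fq, (if a - b = 0 then (1:ℕ) else 0) = if a = b then 1 else 0 := by
      intro b; congr 1; simp [sub_eq_zero]
    simp_rw [this]
    rw [Finset.sum_ite_eq A a (fun _ => (1:ℕ))]
    simp [ha]
  rw [Finset.sum_congr rfl h, Finset.sum_const, smul_eq_mul, mul_one]

lemma sum_and_ind {α β : Type*} (s : Finset α) (t : Finset β)
    (P : α → Prop) (Q : β → Prop) [DecidablePred P] [DecidablePred Q] :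
    ∑ v ∈ s ×ˢ t, (if P v.1 ∧ Q v.2 then (1:ℕ) else 0)
      = (∑ a ∈ s, if P a then (1:ℕ) else 0) * (∑ b ∈ t, if Q b then (1:ℕ) else 0) := by
  rw [Finset.sum_mul_sum, Finset.sum_product]
  congr 1; ext a; congr 1; ext b
  by_cases hP : P a <;> by_cases hQ : Q b <;> simp [hP, hQ]

lemma sum_e (A : Finset Fq) :
    (∑ ξ : Fq, (((A ×ˢ A) ×ˢ A ×ˢ A).filter
        (fun t => t.1.1 - t.1.2 = ξ * (t.2.1 - t.2.2))).card) + A.card ^ 3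
      = Fintype.card Fq * A.card ^ 2 + A.card ^ 4 := by
  classical
  set S := (A ×ˢ A) ×ˢ A ×ˢ A with hS
  have h1 : (∑ ξ : Fq, (S.filter
        (fun t => t.1.1 - t.1.2 = ξ * (t.2.1 - t.2.2))).card)
      = ∑ v ∈ S, (univ.filter (fun ξ : Fq => v.1.1 - v.1.2 = ξ * (v.2.1 - v.2.2))).card := by
    simp_rw [Finset.card_filter]
    rw [Finset.sum_comm]
  -- the diagonal indicator sum over S
  have h2 : ∑ v ∈ S, (if v.2.1 - v.2.2 = 0 then (1:ℕ) else 0) = A.card ^ 3 := by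
    rw [hS, Finset.sum_product]
    have : ∀ u ∈ A ×ˢ A, (∑ r ∈ A ×ˢ A, if r.1 - r.2 = 0 then (1:ℕ) else 0) = A.card :=
      fun u _ => sum_diag_ind A
    rw [Finset.sum_congr rfl this, Finset.sum_const, smul_eq_mul, Finset.card_product]
    ring
  have h3 : ∑ v ∈ S, (if v.1.1 - v.1.2 = 0 ∧ v.2.1 - v.2.2 = 0 then (1:ℕ) else 0)
      = A.card ^ 2 := by
    rw [hS]
    refine (sum_and_ind (A ×ˢ A) (A ×ˢ A)
      (fun u => u.1 - u.2 = 0) (fun r => r.1 - r.2 = 0)).trans ?_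
    rw [sum_diag_ind]; ring
  have h4 : ∑ v ∈ S, (((univ.filter (fun ξ : Fq => v.1.1 - v.1.2 = ξ * (v.2.1 - v.2.2))).card)
        + (if v.2.1 - v.2.2 = 0 then (1:ℕ) else 0))
      = ∑ v ∈ S, (1 + Fintype.card Fq * (if v.1.1 - v.1.2 = 0 ∧ v.2.1 - v.2.2 = 0
          then (1:ℕ) else 0)) := by
    apply Finset.sum_congr rfl
    intro v _
    exact count_one (v.1.1 - v.1.2) (v.2.1 - v.2.2)
  rw [Finset.sum_add_distrib] at h4
  rw [h2] at h4
  rw [Finset.sum_add_distrib, Finset.sum_const, ← Finset.mul_sum, h3] at h4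
  rw [h1, h4, smul_eq_mul, mul_one, hS, Finset.card_product, Finset.card_product]
  ring

lemma cross_card (A : Finset Fq) :
    ((((A ×ˢ A) ×ˢ A ×ˢ A) ×ˢ ((A ×ˢ A) ×ˢ A ×ˢ A)).filter
        (fun w => (w.1.1.1 - w.1.1.2) * (w.2.2.1 - w.2.2.2)
          = (w.2.1.1 - w.2.1.2) * (w.1.2.1 - w.1.2.2))).card
    = ((((A ×ˢ A) ×ˢ A ×ˢ A) ×ˢ ((A ×ˢ A) ×ˢ A ×ˢ A)).filter
        (fun t => (t.1.1.1 - t.1.1.2) * (t.1.2.1 - t.1.2.2)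
          = (t.2.1.1 - t.2.1.2) * (t.2.2.1 - t.2.2.2))).card := by
  refine Finset.card_nbij' (fun w => ((w.1.1, w.2.2), (w.2.1, w.1.2)))
    (fun w => ((w.1.1, w.2.2), (w.2.1, w.1.2))) ?_ ?_ ?_ ?_ <;>
    intro w hw <;>
    first
      | rfl
      | (simp only [Finset.mem_coe, Finset.mem_filter, Finset.mem_product] at hw ⊢; tauto)

lemma sum_e_sq (A : Finset Fq) :
    (∑ ξ : Fq, ((((A ×ˢ A) ×ˢ A ×ˢ A).filter
        (fun t => t.1.1 - t.1.2 = ξ * (t.2.1 - t.2.2))).card) ^ 2) + A.card ^ 6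
      = ((((A ×ˢ A) ×ˢ A ×ˢ A) ×ˢ ((A ×ˢ A) ×ˢ A ×ˢ A)).filter
        (fun t => (t.1.1.1 - t.1.1.2) * (t.1.2.1 - t.1.2.2)
          = (t.2.1.1 - t.2.1.2) * (t.2.2.1 - t.2.2.2))).card
        + Fintype.card Fq * A.card ^ 4 := by
  classical
  set S := (A ×ˢ A) ×ˢ A ×ˢ A with hS
  -- step 1: e ξ ^ 2 as a sum over S ×ˢ S
  have h1 : ∀ ξ : Fq, ((S.filter (fun t => t.1.1 - t.1.2 = ξ * (t.2.1 - t.2.2))).card) ^ 2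
      = ∑ w ∈ S ×ˢ S, (if (w.1.1.1 - w.1.1.2 = ξ * (w.1.2.1 - w.1.2.2))
          ∧ (w.2.1.1 - w.2.1.2 = ξ * (w.2.2.1 - w.2.2.2)) then (1:ℕ) else 0) := by
    intro ξ
    rw [sq, Finset.card_filter, Finset.sum_mul_sum, ← Finset.sum_product']
    apply Finset.sum_congr rfl
    intro w _
    by_cases h1 : w.1.1.1 - w.1.1.2 = ξ * (w.1.2.1 - w.1.2.2) <;>
      by_cases h2 : w.2.1.1 - w.2.1.2 = ξ * (w.2.2.1 - w.2.2.2) <;> simp [h1, h2]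
  -- step 2: swap the sums
  have h2 : (∑ ξ : Fq, ((S.filter (fun t => t.1.1 - t.1.2 = ξ * (t.2.1 - t.2.2))).card) ^ 2)
      = ∑ w ∈ S ×ˢ S, (univ.filter (fun ξ : Fq =>
          (w.1.1.1 - w.1.1.2 = ξ * (w.1.2.1 - w.1.2.2))
          ∧ (w.2.1.1 - w.2.1.2 = ξ * (w.2.2.1 - w.2.2.2)))).card := by
    simp_rw [h1]
    rw [Finset.sum_comm]
    apply Finset.sum_congr rfl
    intro w _
    rw [Finset.card_filter]
  -- diagonal sums
  have hd1 : ∑ v ∈ S, (if v.2.1 - v.2.2 = 0 then (1:ℕ) else 0) = A.card ^ 3 := by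
    rw [hS, Finset.sum_product]
    have : ∀ u ∈ A ×ˢ A, (∑ r ∈ A ×ˢ A, if r.1 - r.2 = 0 then (1:ℕ) else 0) = A.card :=
      fun u _ => sum_diag_ind A
    rw [Finset.sum_congr rfl this, Finset.sum_const, smul_eq_mul, Finset.card_product]
    ring
  have hd2 : ∑ v ∈ S, (if v.1.1 - v.1.2 = 0 ∧ v.2.1 - v.2.2 = 0 then (1:ℕ) else 0)
      = A.card ^ 2 := by
    rw [hS]
    refine (sum_and_ind (A ×ˢ A) (A ×ˢ A)
      (fun u => u.1 - u.2 = 0) (fun r => r.1 - r.2 = 0)).trans ?_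
    rw [sum_diag_ind]; ring
  have h3 : ∑ w ∈ S ×ˢ S, (if (w.1.2.1 - w.1.2.2 = 0) ∧ (w.2.2.1 - w.2.2.2 = 0)
      then (1:ℕ) else 0) = A.card ^ 6 := by
    refine (sum_and_ind S S
      (fun v => v.2.1 - v.2.2 = 0) (fun v => v.2.1 - v.2.2 = 0)).trans ?_
    rw [hd1]; ring
  have h4 : ∑ w ∈ S ×ˢ S, (if ((w.1.1.1 - w.1.1.2 = 0) ∧ (w.1.2.1 - w.1.2.2 = 0))
      ∧ ((w.2.1.1 - w.2.1.2 = 0) ∧ (w.2.2.1 - w.2.2.2 = 0)) then (1:ℕ) else 0)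
      = A.card ^ 4 := by
    refine (sum_and_ind S S
      (fun v => v.1.1 - v.1.2 = 0 ∧ v.2.1 - v.2.2 = 0)
      (fun v => v.1.1 - v.1.2 = 0 ∧ v.2.1 - v.2.2 = 0)).trans ?_
    rw [hd2]; ring
  -- pointwise identity summed
  have h5 : ∑ w ∈ S ×ˢ S, ((univ.filter (fun ξ : Fq =>
          (w.1.1.1 - w.1.1.2 = ξ * (w.1.2.1 - w.1.2.2))
          ∧ (w.2.1.1 - w.2.1.2 = ξ * (w.2.2.1 - w.2.2.2)))).card
        + (if (w.1.2.1 - w.1.2.2 = 0) ∧ (w.2.2.1 - w.2.2.2 = 0) then (1:ℕ) else 0))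
      = ∑ w ∈ S ×ˢ S, ((if (w.1.1.1 - w.1.1.2) * (w.2.2.1 - w.2.2.2)
            = (w.2.1.1 - w.2.1.2) * (w.1.2.1 - w.1.2.2) then (1:ℕ) else 0)
          + Fintype.card Fq * (if ((w.1.1.1 - w.1.1.2 = 0) ∧ (w.1.2.1 - w.1.2.2 = 0))
            ∧ ((w.2.1.1 - w.2.1.2 = 0) ∧ (w.2.2.1 - w.2.2.2 = 0)) then (1:ℕ) else 0)) := by
    apply Finset.sum_congr rfl
    intro w _
    exact count_two _ _ _ _
  rw [Finset.sum_add_distrib, Finset.sum_add_distrib, h3, ← Finset.mul_sum, h4] at h5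
  have h6 : ∑ w ∈ S ×ˢ S, (if (w.1.1.1 - w.1.1.2) * (w.2.2.1 - w.2.2.2)
      = (w.2.1.1 - w.2.1.2) * (w.1.2.1 - w.1.2.2) then (1:ℕ) else 0)
      = ((S ×ˢ S).filter (fun w => (w.1.1.1 - w.1.1.2) * (w.2.2.1 - w.2.2.2)
          = (w.2.1.1 - w.2.1.2) * (w.1.2.1 - w.1.2.2))).card := by
    rw [Finset.card_filter]
  rw [h6] at h5
  rw [h2, h5, hS, cross_card]

lemma e_le (A : Finset Fq) (ξ : Fq) :
    (((A ×ˢ A) ×ˢ A ×ˢ A).filter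
        (fun t => t.1.1 - t.1.2 = ξ * (t.2.1 - t.2.2))).card ≤ A.card ^ 3 := by
  classical
  have h : (((A ×ˢ A) ×ˢ A ×ˢ A).filter
        (fun t => t.1.1 - t.1.2 = ξ * (t.2.1 - t.2.2))).card ≤ (A ×ˢ A ×ˢ A).card := by
    apply Finset.card_le_card_of_injOn (fun v => (v.1.2, v.2))
    · intro v hv
      simp only [Finset.mem_coe, Finset.mem_filter, Finset.mem_product] at hv
      simp only [Finset.mem_coe, Finset.mem_product]
      exact ⟨hv.1.1.2, hv.1.2⟩
    · intro v hv v' hv' heq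
      simp only [Finset.mem_coe, Finset.mem_filter, Finset.mem_product] at hv hv'
      have heq' : (v.1.2, v.2) = (v'.1.2, v'.2) := heq
      have h2 : v.1.2 = v'.1.2 := (Prod.ext_iff.mp heq').1
      have h3 : v.2 = v'.2 := (Prod.ext_iff.mp heq').2
      have h1 : v.1.1 = v'.1.1 := by
        have e1 := hv.2; have e2 := hv'.2
        rw [h3] at e1
        have h4 : v.1.1 - v.1.2 = v'.1.1 - v'.1.2 := by rw [e1, e2]
        rw [h2] at h4
        linear_combination h4
      exact Prod.ext (Prod.ext h1 h2) h3
  calc _ ≤ (A ×ˢ A ×ˢ A).card := h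
  _ = A.card ^ 3 := by rw [Finset.card_product, Finset.card_product]; ring

lemma e_ge (A : Finset Fq) (ξ : Fq) :
    A.card ^ 4 ≤ Fintype.card Fq * (((A ×ˢ A) ×ˢ A ×ˢ A).filter
        (fun t => t.1.1 - t.1.2 = ξ * (t.2.1 - t.2.2))).card := by
  classical
  set B := A ×ˢ A with hB
  set k : Fq × Fq → Fq := fun u => u.1 - ξ * u.2 with hk
  set r : Fq → ℕ := fun x => ((B.filter (fun u => k u = x)).card) with hr
  -- reindex: e ξ = #{(u,v) ∈ B × B : k u = k v}
  have h1 : (((A ×ˢ A) ×ˢ A ×ˢ A).filter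
        (fun t => t.1.1 - t.1.2 = ξ * (t.2.1 - t.2.2))).card
      = ((B ×ˢ B).filter (fun w => k w.1 = k w.2)).card := by
    refine Finset.card_nbij' (fun v => ((v.1.1, v.2.1), (v.1.2, v.2.2)))
      (fun v => ((v.1.1, v.2.1), (v.1.2, v.2.2))) ?_ ?_ ?_ ?_
    · intro v hv
      simp only [Finset.mem_coe, Finset.mem_filter, Finset.mem_product, hB, hk] at hv ⊢
      refine ⟨⟨⟨hv.1.1.1, hv.1.2.1⟩, hv.1.1.2, hv.1.2.2⟩, ?_⟩
      linear_combination hv.2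
    · intro v hv
      simp only [Finset.mem_coe, Finset.mem_filter, Finset.mem_product, hB, hk] at hv ⊢
      refine ⟨⟨⟨hv.1.1.1, hv.1.2.1⟩, hv.1.1.2, hv.1.2.2⟩, ?_⟩
      linear_combination hv.2
    · intro v _; rfl
    · intro v _; rfl
  -- energy as sum of squared fibers
  have h2 : ((B ×ˢ B).filter (fun w => k w.1 = k w.2)).card = ∑ x : Fq, (r x) ^ 2 := by
    rw [Finset.card_filter, Finset.sum_product]
    have hpt : ∀ u v : Fq × Fq, (if k u = k v then (1:ℕ) else 0)
        = ∑ x : Fq, (if k u = x then (1:ℕ) else 0) * (if k v = x then 1 else 0) := by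
      intro u v
      by_cases h : k u = k v
      · rw [h]
        have he : ∀ x : Fq, (if k v = x then (1:ℕ) else 0) * (if k v = x then 1 else 0)
            = if k v = x then 1 else 0 := by
          intro x; by_cases hx : k v = x <;> simp [hx]
        simp_rw [he]
        rw [Finset.sum_ite_eq univ (k v) (fun _ => (1:ℕ))]
        simp
      · rw [if_neg h]
        symm
        apply Finset.sum_eq_zero
        intro x _
        by_cases h1 : k u = x
        · have h2 : ¬ (k v = x) := fun hc => h (h1.trans hc.symm)
          simp [h1, h2]
        · simp [h1]
    simp_rw [hpt]
    have hsw1 : ∀ u ∈ B, (∑ v ∈ B, ∑ x : Fq,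
          (if k u = x then (1:ℕ) else 0) * (if k v = x then 1 else 0))
        = ∑ x : Fq, ∑ v ∈ B, (if k u = x then (1:ℕ) else 0) * (if k v = x then 1 else 0) :=
      fun u _ => Finset.sum_comm
    rw [Finset.sum_congr rfl hsw1, Finset.sum_comm]
    apply Finset.sum_congr rfl
    intro x _
    have hrx : ∀ y : Fq, r y = ∑ u ∈ B, if k u = y then (1:ℕ) else 0 :=
      fun y => Finset.card_filter _ _
    rw [← Finset.sum_mul_sum, sq, hrx]
  -- fibers partition B
  have h3 : ∑ x : Fq, r x = B.card := by
    rw [hr]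
    exact (Finset.card_eq_sum_card_fiberwise (f := k) (t := univ)
      (fun u _ => Finset.mem_univ _)).symm
  -- Cauchy–Schwarz
  have hcs : ((B.card : ℝ))^2 ≤ (Fintype.card Fq : ℝ) * ∑ x : Fq, ((r x : ℝ))^2 := by
    have hc := Finset.sum_mul_sq_le_sq_mul_sq univ (fun _ => (1:ℝ)) (fun x => (r x : ℝ))
    simp only [one_mul, one_pow] at hc
    rw [Finset.sum_const, Finset.card_univ, nsmul_eq_mul, mul_one] at hc
    have hbc : ((B.card : ℝ)) = ∑ x : Fq, ((r x : ℝ)) := by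
      rw [← h3]; push_cast; rfl
    rw [hbc]
    exact hc
  rw [h1, h2]
  have hfinal : ((A.card : ℝ)) ^ 4 ≤ (Fintype.card Fq : ℝ) * ((∑ x : Fq, (r x)^2 : ℕ) : ℝ) := by
    have hb4 : ((A.card : ℝ))^4 = ((B.card : ℝ))^2 := by
      rw [hB, Finset.card_product]; push_cast; ring
    rw [hb4]
    refine hcs.trans (le_of_eq ?_)
    congr 1
    push_cast
    rfl
  exact_mod_cast hfinal

end AuxLemmas

set_option maxHeartbeats 4000000 in
/-- Theorem B: if `|A| ≤ q/(4K)` and `D_×(A) ≥ |A|⁸/q + 3q|A|⁵/K`, then there is a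
set `X ⊆ F_q` with `E(A, ξA) ≥ |A|³/K` for all `ξ ∈ X` and
`q/(K|A|) ≤ |X| ≤ 4Kq/(3|A|)`. -/
theorem stmt_4 {Fq : Type*} [Field Fq] [Fintype Fq] [DecidableEq Fq]
    (A : Finset Fq) (K : ℝ) (hK : 0 < K)
    (hA : (A.card : ℝ) ≤ (Fintype.card Fq : ℝ) / (4 * K))
    (hD : (((((A ×ˢ A) ×ˢ A ×ˢ A) ×ˢ ((A ×ˢ A) ×ˢ A ×ˢ A)).filter
        (fun t => (t.1.1.1 - t.1.1.2) * (t.1.2.1 - t.1.2.2)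
          = (t.2.1.1 - t.2.1.2) * (t.2.2.1 - t.2.2.2))).card : ℝ) ≥
      (A.card : ℝ) ^ 8 / (Fintype.card Fq : ℝ)
        + 3 * (Fintype.card Fq : ℝ) * (A.card : ℝ) ^ 5 / K) :
    ∃ X : Finset Fq,
      (∀ ξ ∈ X, ((((A ×ˢ A) ×ˢ A ×ˢ A).filter
          (fun t => t.1.1 - t.1.2 = ξ * (t.2.1 - t.2.2))).card : ℝ)
            ≥ (A.card : ℝ) ^ 3 / K) ∧
      (Fintype.card Fq : ℝ) / (K * A.card) ≤ (X.card : ℝ) ∧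
      (X.card : ℝ) ≤ 4 * K * (Fintype.card Fq : ℝ) / (3 * A.card) := by
  classical
  rcases Nat.eq_zero_or_pos A.card with hA0 | hApos
  · refine ⟨∅, ?_, ?_, ?_⟩
    · intro ξ hξ; simp at hξ
    · simp [hA0]
    · simp [hA0]
  -- main case
  set Q : ℝ := (Fintype.card Fq : ℝ) with hQdef
  set N : ℝ := (A.card : ℝ) with hNdef
  set E : Fq → ℝ := fun ξ => ((((A ×ˢ A) ×ˢ A ×ˢ A).filter
      (fun t => t.1.1 - t.1.2 = ξ * (t.2.1 - t.2.2))).card : ℝ) with hEdef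
  have hQ : 0 < Q := by
    rw [hQdef]; exact_mod_cast Fintype.card_pos
  have hN : 1 ≤ N := by
    rw [hNdef]; exact_mod_cast hApos
  have hN0 : 0 < N := lt_of_lt_of_le one_pos hN
  set Dr : ℝ := (((((A ×ˢ A) ×ˢ A ×ˢ A) ×ˢ ((A ×ˢ A) ×ˢ A ×ˢ A)).filter
      (fun t => (t.1.1.1 - t.1.1.2) * (t.1.2.1 - t.1.2.2)
        = (t.2.1.1 - t.2.1.2) * (t.2.2.1 - t.2.2.2))).card : ℝ) with hDrdef
  -- cast the counting lemmas
  have hEle : ∀ ξ : Fq, E ξ ≤ N ^ 3 := by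
    intro ξ
    rw [hEdef, hNdef]
    beta_reduce
    exact_mod_cast e_le A ξ
  have hEge : ∀ ξ : Fq, N ^ 4 ≤ Q * E ξ := by
    intro ξ
    rw [hEdef, hNdef, hQdef]
    beta_reduce
    exact_mod_cast e_ge A ξ
  have hsum : (∑ ξ : Fq, E ξ) + N ^ 3 = Q * N ^ 2 + N ^ 4 := by
    rw [hEdef, hNdef, hQdef]
    beta_reduce
    exact_mod_cast sum_e A
  have hsumsq : (∑ ξ : Fq, (E ξ) ^ 2) + N ^ 6 = Dr + Q * N ^ 4 := by
    rw [hEdef, hNdef, hQdef, hDrdef]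
    beta_reduce
    exact_mod_cast sum_e_sq A
  have hE0 : ∀ ξ : Fq, 0 ≤ E ξ := by
    intro ξ; rw [hEdef]; positivity
  -- from hA : N ≤ Q / (4K)
  have hKN : 4 * (K * N) ≤ Q := by
    have h4K : (0:ℝ) < 4 * K := by linarith
    have := (le_div_iff₀ h4K).mp hA
    calc 4 * (K * N) = N * (4 * K) := by ring
    _ ≤ Q := this
  -- G ξ = Q * E ξ - N^4 ≥ 0
  set G : Fq → ℝ := fun ξ => Q * E ξ - N ^ 4 with hGdef
  have hG0 : ∀ ξ, 0 ≤ G ξ := fun ξ => by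
    rw [hGdef]; simp only; linarith [hEge ξ]
  have hGle : ∀ ξ, G ξ ≤ Q * N ^ 3 := fun ξ => by
    rw [hGdef]; simp only
    have h1 := hEle ξ
    have h2 : Q * E ξ ≤ Q * N ^ 3 := mul_le_mul_of_nonneg_left h1 hQ.le
    have h3 : (0:ℝ) ≤ N ^ 4 := by positivity
    linarith
  have hsumG : ∑ ξ : Fq, G ξ = Q ^ 2 * N ^ 2 - Q * N ^ 3 := by
    rw [hGdef]
    rw [Finset.sum_sub_distrib, ← Finset.mul_sum, Finset.sum_const, Finset.card_univ,
      nsmul_eq_mul, ← hQdef]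
    linear_combination Q * hsum
  have hsumG2 : ∑ ξ : Fq, (G ξ) ^ 2
      = Q ^ 2 * Dr + Q ^ 3 * N ^ 4 - 3 * Q ^ 2 * N ^ 6 + 2 * Q * N ^ 7 - Q * N ^ 8 := by
    have hexp : ∀ ξ : Fq, (G ξ) ^ 2
        = Q ^ 2 * (E ξ) ^ 2 - 2 * Q * N ^ 4 * E ξ + N ^ 8 := fun ξ => by
      rw [hGdef]; simp only; ring
    rw [Finset.sum_congr rfl (fun ξ _ => hexp ξ), Finset.sum_add_distrib,
      Finset.sum_sub_distrib, ← Finset.mul_sum, ← Finset.mul_sum,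
      Finset.sum_const, Finset.card_univ, nsmul_eq_mul, ← hQdef]
    have hE2 : ∑ ξ : Fq, (E ξ) ^ 2 = Dr + Q * N ^ 4 - N ^ 6 := by linarith
    have hE1 : ∑ ξ : Fq, E ξ = Q * N ^ 2 + N ^ 4 - N ^ 3 := by linarith
    rw [hE2, hE1]; ring
  -- multiplied-out form of hD
  have hDr' : K * Q * N ^ 8 + 3 * Q ^ 3 * N ^ 5 ≤ K * Q ^ 2 * Dr := by
    have hmul := mul_le_mul_of_nonneg_left hD
      (mul_nonneg hK.le (pow_nonneg hQ.le 2) : (0:ℝ) ≤ K * Q ^ 2)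
    have e1 : K * Q ^ 2 * (N ^ 8 / Q + 3 * Q * N ^ 5 / K)
        = K * Q * N ^ 8 + 3 * Q ^ 3 * N ^ 5 := by
      field_simp
    rw [e1] at hmul
    exact hmul
  -- key lower bound on K * ∑ G²
  have hKey : 9 / 4 * (Q ^ 3 * N ^ 5) ≤ K * ∑ ξ : Fq, (G ξ) ^ 2 := by
    rw [hsumG2]
    have hQn : (0:ℝ) ≤ Q := hQ.le
    have hNn : (0:ℝ) ≤ N := hN0.le
    have h6 : 3 * (Q ^ 2 * N ^ 5) * (K * N) ≤ 3 * (Q ^ 2 * N ^ 5) * (Q / 4) :=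
      mul_le_mul_of_nonneg_left (by linarith)
        (by nlinarith [pow_nonneg hQn 2, pow_nonneg hNn 5])
    nlinarith [hDr', mul_nonneg hK.le (mul_nonneg (pow_nonneg hQn 3) (pow_nonneg hNn 4)),
      mul_nonneg hK.le (mul_nonneg hQn (pow_nonneg hNn 7))]
  -- the popular set
  obtain ⟨P, hPdef⟩ : ∃ P : Finset Fq, P = univ.filter (fun ξ => N ^ 3 / K ≤ E ξ) :=
    ⟨_, rfl⟩
  have hsplit : (∑ ξ ∈ P, (G ξ) ^ 2) + (∑ ξ ∈ Pᶜ, (G ξ) ^ 2) = ∑ ξ : Fq, (G ξ) ^ 2 :=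
    Finset.sum_add_sum_compl P _
  have hQN3 : (0:ℝ) ≤ Q * N ^ 3 := mul_nonneg hQ.le (pow_nonneg hN0.le 3)
  have htailG : ∑ ξ ∈ Pᶜ, G ξ ≤ ∑ ξ : Fq, G ξ :=
    Finset.sum_le_sum_of_subset_of_nonneg (Finset.subset_univ _)
      (fun i _ _ => hG0 i)
  have htail : K * ∑ ξ ∈ Pᶜ, (G ξ) ^ 2 ≤ Q ^ 3 * N ^ 5 := by
    have hpt : ∀ ξ ∈ Pᶜ, K * (G ξ) ^ 2 ≤ (Q * N ^ 3) * G ξ := by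
      intro ξ hξ
      have hmem : ¬ (N ^ 3 / K ≤ E ξ) := fun hle =>
        (Finset.mem_compl.mp hξ)
          (hPdef.symm ▸ Finset.mem_filter.mpr ⟨Finset.mem_univ ξ, hle⟩)
      have hlt : E ξ < N ^ 3 / K := lt_of_not_ge hmem
      have hKE : E ξ * K < N ^ 3 := (lt_div_iff₀ hK).mp hlt
      have hKG : K * G ξ ≤ Q * N ^ 3 := by
        rw [hGdef]; simp only
        have h1 := mul_le_mul_of_nonneg_left hKE.le hQ.le
        have h2 : (0:ℝ) ≤ K * N ^ 4 := mul_nonneg hK.le (pow_nonneg hN0.le 4)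
        nlinarith
      have h3 := mul_le_mul_of_nonneg_right hKG (hG0 ξ)
      calc K * (G ξ) ^ 2 = (K * G ξ) * G ξ := by ring
      _ ≤ (Q * N ^ 3) * G ξ := h3
    calc K * ∑ ξ ∈ Pᶜ, (G ξ) ^ 2 = ∑ ξ ∈ Pᶜ, K * (G ξ) ^ 2 := Finset.mul_sum _ _ _
    _ ≤ ∑ ξ ∈ Pᶜ, (Q * N ^ 3) * G ξ := Finset.sum_le_sum hpt
    _ = (Q * N ^ 3) * ∑ ξ ∈ Pᶜ, G ξ := (Finset.mul_sum _ _ _).symm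
    _ ≤ (Q * N ^ 3) * ∑ ξ : Fq, G ξ := mul_le_mul_of_nonneg_left htailG hQN3
    _ = (Q * N ^ 3) * (Q ^ 2 * N ^ 2 - Q * N ^ 3) := by rw [hsumG]
    _ ≤ Q ^ 3 * N ^ 5 := by nlinarith [sq_nonneg (Q * N ^ 3)]
  have hPsum : 5 / 4 * (Q ^ 3 * N ^ 5) ≤ K * ∑ ξ ∈ P, (G ξ) ^ 2 := by
    have hKsplit : K * ((∑ ξ ∈ P, (G ξ) ^ 2) + (∑ ξ ∈ Pᶜ, (G ξ) ^ 2))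
        = K * ∑ ξ : Fq, (G ξ) ^ 2 := by rw [hsplit]
    nlinarith [hKey, htail]
  have hPbound : ∑ ξ ∈ P, (G ξ) ^ 2 ≤ (P.card : ℝ) * (Q ^ 2 * N ^ 6) := by
    have hpt : ∀ ξ ∈ P, (G ξ) ^ 2 ≤ Q ^ 2 * N ^ 6 := by
      intro ξ _
      nlinarith [hG0 ξ, hGle ξ, hQN3]
    calc ∑ ξ ∈ P, (G ξ) ^ 2 ≤ P.card • (Q ^ 2 * N ^ 6) := Finset.sum_le_card_nsmul P _ _ hpt
    _ = (P.card : ℝ) * (Q ^ 2 * N ^ 6) := nsmul_eq_mul _ _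
  have hQ2N5 : (0:ℝ) < Q ^ 2 * N ^ 5 :=
    mul_pos (pow_pos hQ 2) (pow_pos hN0 5)
  have hlow : Q ≤ (P.card : ℝ) * (K * N) := by
    have h1 : 5 / 4 * (Q ^ 3 * N ^ 5) ≤ K * ((P.card : ℝ) * (Q ^ 2 * N ^ 6)) :=
      le_trans hPsum (mul_le_mul_of_nonneg_left hPbound hK.le)
    have h2 : Q * (Q ^ 2 * N ^ 5) ≤ ((P.card : ℝ) * (K * N)) * (Q ^ 2 * N ^ 5) := by
      nlinarith [hQ2N5.le, mul_pos (pow_pos hQ 3) (pow_pos hN0 5)]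
    exact le_of_mul_le_mul_right h2 hQ2N5
  have hup_pt : ∀ ξ ∈ P, 3 / 4 * (Q * N ^ 3) ≤ K * G ξ := by
    intro ξ hξ
    have hmem := (Finset.mem_filter.mp (hPdef ▸ hξ)).2
    have hKE : N ^ 3 ≤ E ξ * K := (div_le_iff₀ hK).mp hmem
    rw [hGdef]; simp only
    have h1 := mul_le_mul_of_nonneg_left hKE hQ.le
    have h2 : K * N * N ^ 3 ≤ (Q / 4) * N ^ 3 :=
      mul_le_mul_of_nonneg_right (by linarith) (pow_nonneg hN0.le 3)
    nlinarith
  have hsumPG : ∑ ξ ∈ P, G ξ ≤ Q ^ 2 * N ^ 2 := by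
    have h1 : ∑ ξ ∈ P, G ξ ≤ ∑ ξ : Fq, G ξ :=
      Finset.sum_le_sum_of_subset_of_nonneg (Finset.subset_univ _)
        (fun i _ _ => hG0 i)
    rw [hsumG] at h1
    nlinarith [hQN3]
  have hhigh : (P.card : ℝ) * (3 * N) ≤ 4 * K * Q := by
    have h1 : P.card • (3 / 4 * (Q * N ^ 3)) ≤ ∑ ξ ∈ P, K * G ξ :=
      Finset.card_nsmul_le_sum P _ _ hup_pt
    rw [nsmul_eq_mul] at h1
    have h2 : ∑ ξ ∈ P, K * G ξ = K * ∑ ξ ∈ P, G ξ := (Finset.mul_sum _ _ _).symm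
    have h3 : K * ∑ ξ ∈ P, G ξ ≤ K * (Q ^ 2 * N ^ 2) :=
      mul_le_mul_of_nonneg_left hsumPG hK.le
    have h4 : (P.card : ℝ) * (3 / 4 * (Q * N ^ 3)) ≤ K * (Q ^ 2 * N ^ 2) := by
      rw [h2] at h1; linarith
    have hQN24 : (0:ℝ) < Q * N ^ 2 / 4 := by
      have := mul_pos hQ (pow_pos hN0 2); linarith
    have h5 : ((P.card : ℝ) * (3 * N)) * (Q * N ^ 2 / 4) ≤ (4 * K * Q) * (Q * N ^ 2 / 4) := by
      nlinarith
    exact le_of_mul_le_mul_right h5 hQN24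
  refine ⟨P, ?_, ?_, ?_⟩
  · intro ξ hξ
    have h := (Finset.mem_filter.mp (hPdef ▸ hξ)).2
    rw [hEdef] at h
    exact h
  · rw [div_le_iff₀ (mul_pos hK hN0)]
    exact hlow
  · rw [le_div_iff₀ (by linarith : (0:ℝ) < 3 * N)]
    exact hhigh
end
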